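/- arXiv:2012.03761 — 2 statements merged into one kernel-verified Lean document; each statement's English description precedes it below -/
import Mathlib

section
/- Under the hypotheses of the previous statement (uniform convergence with summable δ_j and summable ε_j, x_k being ε_k-optimal for f_k), for each k ≥ 1 the inequality f(x_k) − v* ≤ 2∑_{j=k}^∞ δ_j + 2∑_{j=k}^∞ ε_j holds, where v* = min_{x∈X} f(x). -/
open Filter Topology

theorem stmt1 {d : ℕ} (X : Set (EuclideanSpace ℝ (Fin d)))
    (hXc : IsCompact X) (hXne : X.Nonempty)
    (f : ℕ → EuclideanSpace ℝ (Fin d) → ℝ) (g : EuclideanSpace ℝ (Fin d) → ℝ)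
    (hconv : ∀ k, ConvexOn ℝ X (f k))
    (hunif : TendstoUniformlyOn f g atTop X)
    (δ ε : ℕ → ℝ)
    (hδ : ∀ k, ∀ y ∈ X, |f k y - f (k + 1) y| ≤ δ (k + 1))
    (hδs : Summable δ) (hεs : Summable ε)
    (x : ℕ → EuclideanSpace ℝ (Fin d)) (hx : ∀ k, x k ∈ X)
    (hopt : ∀ k, ∀ y ∈ X, f k (x k) ≤ f k y + ε k)
    (xstar : EuclideanSpace ℝ (Fin d)) (hxs : xstar ∈ X)
    (hmin : ∀ y ∈ X, g xstar ≤ g y) :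
    ∀ k : ℕ, 1 ≤ k →
      g (x k) - g xstar ≤ 2 * (∑' j : ℕ, δ (k + j)) + 2 * (∑' j : ℕ, ε (k + j)) := by
  obtain ⟨y0, hy0⟩ := hXne
  have hδ0 : ∀ m, 0 ≤ δ (m + 1) := fun m => le_trans (abs_nonneg _) (hδ m y0 hy0)
  have hε0 : ∀ m, 0 ≤ ε m := fun m => by
    have := hopt m (x m) (hx m); linarith
  have hδsum : ∀ m : ℕ, Summable (fun j => δ (m + j)) := by
    intro m
    have := (summable_nat_add_iff m).2 hδs
    simpa [add_comm] using this
  have hεsum : ∀ m : ℕ, Summable (fun j => ε (m + j)) := by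
    intro m
    have := (summable_nat_add_iff m).2 hεs
    simpa [add_comm] using this
  intro k hk
  -- key bound: uniform limit error
  have key : ∀ y ∈ X, |f k y - g y| ≤ ∑' j : ℕ, δ (k + 1 + j) := by
    intro y hy
    have tele : ∀ n : ℕ, |f k y - f (k + n) y| ≤ ∑ i ∈ Finset.range n, δ (k + 1 + i) := by
      intro n
      induction n with
      | zero => simp
      | succ n ih =>
        have h1 := hδ (k + n) y hy
        have habs : |f k y - f (k + (n + 1)) y| ≤
            |f k y - f (k + n) y| + |f (k + n) y - f (k + n + 1) y| := by
          have : f k y - f (k + (n + 1)) y =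
              (f k y - f (k + n) y) + (f (k + n) y - f (k + n + 1) y) := by
            have : k + (n + 1) = k + n + 1 := rfl
            rw [this]; ring
          rw [this]; exact abs_add_le _ _
        have heq : k + 1 + n = k + n + 1 := by omega
        calc |f k y - f (k + (n + 1)) y|
            ≤ |f k y - f (k + n) y| + |f (k + n) y - f (k + n + 1) y| := habs
          _ ≤ (∑ i ∈ Finset.range n, δ (k + 1 + i)) + δ (k + n + 1) := by
              exact add_le_add ih h1
          _ = ∑ i ∈ Finset.range (n + 1), δ (k + 1 + i) := by
              rw [Finset.sum_range_succ, heq]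
    have hbound : ∀ n : ℕ, |f k y - f (k + n) y| ≤ ∑' j : ℕ, δ (k + 1 + j) := by
      intro n
      refine (tele n).trans ?_
      refine Summable.sum_le_tsum (Finset.range n) (fun i _ => ?_) (hδsum (k + 1))
      have : k + 1 + i = (k + i) + 1 := by omega
      rw [this]; exact hδ0 _
    have hlim : Tendsto (fun n => |f k y - f (k + n) y|) atTop (𝓝 |f k y - g y|) := by
      have h0 : Tendsto (fun n => f n y) atTop (𝓝 (g y)) := hunif.tendsto_at hy
      have h1 : Tendsto (fun n => f (k + n) y) atTop (𝓝 (g y)) := by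
        have := h0.comp (tendsto_add_atTop_nat k)
        simpa [Function.comp_def, add_comm] using this
      exact ((tendsto_const_nhds.sub h1).abs)
    exact le_of_tendsto hlim (Filter.Eventually.of_forall hbound)
  have h1 := key (x k) (hx k)
  have h2 := key xstar hxs
  have h3 := hopt k xstar hxs
  set D := ∑' j : ℕ, δ (k + 1 + j) with hD
  -- D ≤ ∑' j, δ (k + j)
  have hshift : (∑' j : ℕ, δ (k + j)) = δ k + D := by
    rw [Summable.tsum_eq_zero_add (hδsum k)]
    congr 1
    apply tsum_congr; intro j; congr 1; omega
  have hδk : 0 ≤ δ k := by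
    obtain ⟨m, rfl⟩ := Nat.exists_eq_add_of_le hk
    have : 1 + m = m + 1 := by omega
    rw [this]; exact hδ0 m
  have hDle : D ≤ ∑' j : ℕ, δ (k + j) := by rw [hshift]; linarith
  have hεk : ε k ≤ ∑' j : ℕ, ε (k + j) := by
    have := Summable.le_tsum (hεsum k) 0 (fun j _ => hε0 (k + j))
    simpa using this
  have hεnn : 0 ≤ ∑' j : ℕ, ε (k + j) := tsum_nonneg (fun j => hε0 (k + j))
  have e1 : g (x k) - f k (x k) ≤ D := by
    have := abs_le.mp h1; linarith [this.2]
  have e2 : f k xstar - g xstar ≤ D := by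
    have := abs_le.mp h2; linarith [this.1]
  linarith
end

section
/- Under the hypotheses of Lemma on approximate minimizers (uniform convergence with summable δ_j, ε_j, and x_k being ε_k-optimal for f_k), if additionally f satisfies the growth condition f(x) − v* ≥ τ·dist(x, S*)^γ for all x ∈ X with constants τ > 0, γ > 0, where S* is the set of minimizers of f on X, then for each k ≥ 1, dist(x_k, S*) ≤ (2τ^{−1}(∑_{j=k}^∞ δ_j + ∑_{j=k}^∞ ε_j))^{1/γ}. -/
open Filter Topology

theorem stmt2 {d : ℕ} (X : Set (EuclideanSpace ℝ (Fin d)))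
    (hXc : IsCompact X) (hXne : X.Nonempty)
    (f : ℕ → EuclideanSpace ℝ (Fin d) → ℝ) (g : EuclideanSpace ℝ (Fin d) → ℝ)
    (hconv : ∀ k, ConvexOn ℝ X (f k))
    (hunif : TendstoUniformlyOn f g atTop X)
    (δ ε : ℕ → ℝ)
    (hδ : ∀ k, ∀ y ∈ X, |f k y - f (k + 1) y| ≤ δ (k + 1))
    (hδs : Summable δ) (hεs : Summable ε)
    (x : ℕ → EuclideanSpace ℝ (Fin d)) (hx : ∀ k, x k ∈ X)
    (hopt : ∀ k, ∀ y ∈ X, f k (x k) ≤ f k y + ε k)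
    (xstar : EuclideanSpace ℝ (Fin d)) (hxs : xstar ∈ X)
    (hmin : ∀ y ∈ X, g xstar ≤ g y)
    (S : Set (EuclideanSpace ℝ (Fin d))) (hS : S = {y ∈ X | g y = g xstar})
    (τ γ : ℝ) (hτ : 0 < τ) (hγ : 0 < γ)
    (hgrowth : ∀ y ∈ X, τ * Metric.infDist y S ^ γ ≤ g y - g xstar) :
    ∀ k : ℕ, 1 ≤ k →
      Metric.infDist (x k) S ≤
        (2 * τ⁻¹ * ((∑' j : ℕ, δ (k + j)) + ∑' j : ℕ, ε (k + j))) ^ (1 / γ) := by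
  intro k hk
  have hε0 : ∀ j, 0 ≤ ε j := fun j => by
    have := hopt j (x j) (hx j); linarith
  have hδ0 : ∀ j, 1 ≤ j → 0 ≤ δ j := by
    intro j hj
    obtain ⟨y, hy⟩ := hXne
    obtain ⟨m, rfl⟩ := Nat.exists_eq_add_of_le hj
    have h := hδ m y hy
    have : (1 : ℕ) + m = m + 1 := by omega
    rw [this]
    exact le_trans (abs_nonneg _) h
  set D := ∑' j : ℕ, δ (k + j) with hD
  set E := ∑' j : ℕ, ε (k + j) with hE
  have hδsum : Summable (fun j => δ (k + j)) :=
    ((summable_nat_add_iff k).mpr hδs).congr (fun n => by rw [add_comm])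
  have hδsum' : Summable (fun j => δ (k + 1 + j)) :=
    ((summable_nat_add_iff (k + 1)).mpr hδs).congr (fun n => by rw [add_comm])
  have hεsum : Summable (fun j => ε (k + j)) :=
    ((summable_nat_add_iff k).mpr hεs).congr (fun n => by rw [add_comm])
  have hD0 : 0 ≤ D := tsum_nonneg (fun j => hδ0 (k + j) (by omega))
  have hE0 : 0 ≤ E := tsum_nonneg (fun j => hε0 _)
  -- tail sum bound
  have sum_le : ∀ m : ℕ, ∑ i ∈ Finset.range m, δ (k + 1 + i) ≤ D := by
    intro m
    have h1 : ∑ i ∈ Finset.range m, δ (k + 1 + i) ≤ ∑' i : ℕ, δ (k + 1 + i) :=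
      Summable.sum_le_tsum _ (fun i _ => hδ0 _ (by omega)) hδsum'
    have h2 : D = δ k + ∑' i : ℕ, δ (k + 1 + i) := by
      rw [hD, Summable.tsum_eq_zero_add hδsum]
      congr 1
      exact tsum_congr (fun i => by congr 1; omega)
    have h3 : 0 ≤ δ k := hδ0 k hk
    linarith
  have key : ∀ y ∈ X, |f k y - g y| ≤ D := by
    intro y hy
    have bnd : ∀ m : ℕ, |f k y - f (k + m) y| ≤ ∑ i ∈ Finset.range m, δ (k + 1 + i) := by
      intro m
      induction m with
      | zero => simp
      | succ n ih =>
        rw [Finset.sum_range_succ]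
        have h1 := hδ (k + n) y hy
        have h2 : |f k y - f (k + (n + 1)) y| ≤
            |f k y - f (k + n) y| + |f (k + n) y - f (k + n + 1) y| := by
          have : k + (n + 1) = k + n + 1 := rfl
          rw [this]
          exact abs_sub_le _ _ _
        have h3 : δ (k + n + 1) = δ (k + 1 + n) := by congr 1; omega
        linarith
    have hlim : Tendsto (fun m => f (k + m) y) atTop (𝓝 (g y)) := by
      have h := (hunif.tendsto_at hy).comp (tendsto_add_atTop_nat k)
      simpa [Function.comp_def, add_comm] using h
    have htend : Tendsto (fun m => |f k y - f (k + m) y|) atTop (𝓝 |f k y - g y|) :=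
      (tendsto_const_nhds.sub hlim).abs
    exact le_of_tendsto htend
      (Filter.Eventually.of_forall (fun m => (bnd m).trans (sum_le m)))
  -- chain of inequalities
  have hεk : ε k ≤ E := by
    have h := Summable.le_tsum hεsum 0 (fun j _ => hε0 _)
    simpa using h
  have h1 := key (x k) (hx k)
  have h2 := key xstar hxs
  have h3 := hopt k xstar hxs
  have hgap : g (x k) - g xstar ≤ 2 * (D + E) := by
    have a1 : g (x k) ≤ f k (x k) + D := by
      have := abs_le.mp h1; linarith [this.1, this.2]
    have a2 : f k xstar ≤ g xstar + D := by
      have := abs_le.mp h2; linarith [this.1, this.2]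
    linarith
  have hgr := hgrowth (x k) (hx k)
  have hle : Metric.infDist (x k) S ^ γ ≤ 2 * τ⁻¹ * (D + E) := by
    have h4 : τ * Metric.infDist (x k) S ^ γ ≤ 2 * (D + E) := le_trans hgr hgap
    have h5 : (2 : ℝ) * τ⁻¹ * (D + E) = (2 * (D + E)) / τ := by
      field_simp
    rw [h5, le_div_iff₀ hτ]
    nlinarith [h4]
  have hd0 : (0 : ℝ) ≤ Metric.infDist (x k) S := Metric.infDist_nonneg
  calc Metric.infDist (x k) S
      = (Metric.infDist (x k) S ^ γ) ^ (1 / γ) := by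
        rw [← Real.rpow_mul hd0, mul_one_div_cancel hγ.ne', Real.rpow_one]
    _ ≤ (2 * τ⁻¹ * (D + E)) ^ (1 / γ) :=
        Real.rpow_le_rpow (Real.rpow_nonneg hd0 γ) hle (by positivity)
end
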